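/- Let A be a finite set of real numbers written in increasing order A = {a_1 < a_2 < ... < a_n}, and let D = {a_{i+1} - a_i : 1 ≤ i ≤ n-1} be its set of consecutive differences. Suppose D' ⊆ D and L is a positive integer such that every d ∈ D' occurs at least L times as a consecutive difference, i.e. |{i ∈ [n-1] : a_{i+1} - a_i = d}| ≥ L for all d ∈ D'. Then |A + A - A| ≥ c · |D'|² · L for some absolute constant c > 0. -/

import Mathlib

open Pointwise

lemma sum_ranks (s : Finset ℝ) :
    2 * ∑ x ∈ s, (s.filter (fun y => x < y)).card = s.card * (s.card - 1) := by
  induction s using Finset.strongInduction with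
  | _ s ih =>
    rcases s.eq_empty_or_nonempty with rfl | hs
    · simp
    · set m := s.min' hs with hm
      have hms : m ∈ s := s.min'_mem hs
      have hrec := ih (s.erase m) (Finset.erase_ssubset hms)
      have h1 : s.filter (fun y => m < y) = s.erase m := by
        ext y
        simp only [Finset.mem_filter, Finset.mem_erase]
        constructor
        · rintro ⟨hy, hlt⟩; exact ⟨ne_of_gt hlt, hy⟩
        · rintro ⟨hne, hy⟩; exact ⟨hy, lt_of_le_of_ne (s.min'_le y hy) (Ne.symm hne)⟩
      have h2 : ∀ x ∈ s.erase m, s.filter (fun y => x < y) = (s.erase m).filter (fun y => x < y) := by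
        intro x hx
        rw [Finset.filter_erase]
        rw [Finset.erase_eq_of_notMem]
        simp only [Finset.mem_filter, not_and]
        intro _
        exact not_lt.2 (s.min'_le x (Finset.mem_of_mem_erase hx))
      rw [← Finset.add_sum_erase _ _ hms, h1, Finset.sum_congr rfl (fun x hx => by rw [h2 x hx])]
      rw [Finset.card_erase_of_mem hms] at hrec ⊢
      obtain ⟨k, hk⟩ : ∃ k, s.card = k + 1 := ⟨s.card - 1, by have := hs.card_pos; omega⟩
      rw [hk] at hrec ⊢
      simp only [Nat.add_sub_cancel] at hrec ⊢
      rcases k with _ | j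
      · simpa using hrec
      · simp only [Nat.add_sub_cancel] at hrec
        have : (j + 1 + 1) * (j + 1) = 2 * (j + 1) + (j + 1) * j := by ring
        omega

theorem stmt0 :
    ∃ c : ℝ, 0 < c ∧
      ∀ (n : ℕ) (a : ℕ → ℝ), StrictMonoOn a (Set.Icc 1 n) →
        ∀ (D' : Finset ℝ) (L : ℕ), 0 < L →
          (∀ d ∈ D',
            L ≤ ((Finset.Icc 1 (n - 1)).filter (fun i => a (i + 1) - a i = d)).card) →
          (∀ d ∈ D', ∃ i, 1 ≤ i ∧ i ≤ n - 1 ∧ a (i + 1) - a i = d) →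
          c * (D'.card : ℝ) ^ 2 * L ≤
            ((((Finset.Icc 1 n).image a) + ((Finset.Icc 1 n).image a) -
                ((Finset.Icc 1 n).image a)).card : ℝ) := by
  refine ⟨1/4, by norm_num, ?_⟩
  intro n a ha D' L hL hcnt hocc
  set S := (Finset.Icc 1 n).image a with hSdef
  rcases D'.eq_empty_or_nonempty with rfl | hD
  · simp only [Finset.card_empty, Nat.cast_zero]
    norm_num
  obtain ⟨d0, hd0⟩ := hD
  obtain ⟨i0, hi01, hi0n, _⟩ := hocc d0 hd0
  have hn2 : 2 ≤ n := by omega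
  have hmono : ∀ i j, 1 ≤ i → i < j → j ≤ n → a i < a j := fun i j h1 h2 h3 =>
    ha ⟨h1, by omega⟩ ⟨by omega, h3⟩ h2
  have hmono' : ∀ i j, 1 ≤ i → i ≤ j → j ≤ n → a i ≤ a j := by
    intro i j h1 h2 h3
    rcases eq_or_lt_of_le h2 with rfl | h
    · exact le_refl _
    · exact le_of_lt (hmono i j h1 h h3)
  have hdpos : ∀ d ∈ D', 0 < d := by
    intro d hd
    obtain ⟨j, hj1, hjn, hje⟩ := hocc d hd
    have := hmono j (j+1) hj1 (by omega) (by omega)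
    linarith
  have hmemS : ∀ i, 1 ≤ i → i ≤ n → a i ∈ S := fun i h1 h2 =>
    Finset.mem_image_of_mem a (Finset.mem_Icc.mpr ⟨h1, h2⟩)
  have hST : S ⊆ S + S - S := by
    intro x hx
    rw [Finset.mem_sub]
    exact ⟨x + x, Finset.add_mem_add hx hx, x, hx, by ring⟩
  have hScard : S.card = n := by
    rw [hSdef, Finset.card_image_of_injOn, Nat.card_Icc]
    · omega
    · have := ha.injOn
      rwa [Finset.coe_Icc]
  have hnT : n ≤ (S + S - S).card := hScard ▸ Finset.card_le_card hST
  have hLn : L ≤ n - 1 := by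
    have h1 := hcnt d0 hd0
    have hle := Finset.card_filter_le (Finset.Icc 1 (n-1)) (fun i => a (i + 1) - a i = d0)
    rw [Nat.card_Icc] at hle
    omega
  have hDne : D'.Nonempty := ⟨d0, hd0⟩
  rcases eq_or_lt_of_le (Finset.one_le_card.mpr hDne) with hk1 | hk2
  · rw [← hk1]
    have hcard : (L:ℝ) ≤ ((S + S - S).card : ℝ) := by
      exact_mod_cast le_trans (le_trans hLn (Nat.sub_le n 1)) hnT
    push_cast
    have hL1 : (1:ℝ) ≤ (L:ℝ) := by exact_mod_cast hL
    nlinarith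
  -- main case: D'.card ≥ 2
  have hinner : ∀ d' ∈ D', L * (D'.filter (fun d => d' < d)).card ≤
      ((Finset.Icc 1 (n-1)).filter
        (fun i => a (i+1) - a i ∈ D' ∧ d' < a (i+1) - a i)).card := by
    intro d' _
    set t := D'.filter (fun d => d' < d) with ht
    have hdisj : ∀ d ∈ t, ∀ e ∈ t, d ≠ e →
        Disjoint ((Finset.Icc 1 (n-1)).filter (fun i => a (i+1) - a i = d))
          ((Finset.Icc 1 (n-1)).filter (fun i => a (i+1) - a i = e)) := by
      intro d _ e _ hne
      rw [Finset.disjoint_left]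
      intro i hi1 hi2
      simp only [Finset.mem_filter] at hi1 hi2
      exact hne (hi1.2 ▸ hi2.2)
    have hsub : t.biUnion (fun d => (Finset.Icc 1 (n-1)).filter (fun i => a (i+1) - a i = d))
        ⊆ (Finset.Icc 1 (n-1)).filter
          (fun i => a (i+1) - a i ∈ D' ∧ d' < a (i+1) - a i) := by
      intro i hi
      simp only [Finset.mem_biUnion, Finset.mem_filter, ht] at hi ⊢
      obtain ⟨d, ⟨hdD, hdlt⟩, hiI, hieq⟩ := hi
      exact ⟨hiI, by rw [hieq]; exact ⟨hdD, hdlt⟩⟩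
    calc L * t.card = ∑ _d ∈ t, L := by rw [Finset.sum_const, smul_eq_mul, mul_comm]
      _ ≤ ∑ d ∈ t, ((Finset.Icc 1 (n-1)).filter (fun i => a (i+1) - a i = d)).card :=
          Finset.sum_le_sum (fun d hd => hcnt d (Finset.mem_of_mem_filter d hd))
      _ = (t.biUnion (fun d => (Finset.Icc 1 (n-1)).filter (fun i => a (i+1) - a i = d))).card :=
          (Finset.card_biUnion hdisj).symm
      _ ≤ _ := Finset.card_le_card hsub
  set Q : Finset (ℝ × ℕ) := D'.biUnion (fun d' =>
    ((Finset.Icc 1 (n-1)).filter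
      (fun i => a (i+1) - a i ∈ D' ∧ d' < a (i+1) - a i)).image (fun i => (d', i))) with hQ
  have hQdisj : ∀ d' ∈ D', ∀ e' ∈ D', d' ≠ e' →
      Disjoint (((Finset.Icc 1 (n-1)).filter
          (fun i => a (i+1) - a i ∈ D' ∧ d' < a (i+1) - a i)).image (fun i => (d', i)))
        (((Finset.Icc 1 (n-1)).filter
          (fun i => a (i+1) - a i ∈ D' ∧ e' < a (i+1) - a i)).image (fun i => (e', i))) := by
    intro d' _ e' _ hne
    rw [Finset.disjoint_left]
    intro p hp1 hp2
    simp only [Finset.mem_image] at hp1 hp2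
    obtain ⟨i, _, rfl⟩ := hp1
    obtain ⟨j, _, hj⟩ := hp2
    exact hne (by simpa using congrArg Prod.fst hj.symm)
  have hQcard : L * (∑ d' ∈ D', (D'.filter (fun d => d' < d)).card) ≤ Q.card := by
    rw [hQ, Finset.card_biUnion hQdisj, Finset.mul_sum]
    apply Finset.sum_le_sum
    intro d' hd'
    rw [Finset.card_image_of_injective _ (fun x y h => by simpa using h)]
    exact hinner d' hd'
  have hQmem : ∀ p ∈ Q, p.1 ∈ D' ∧ 1 ≤ p.2 ∧ p.2 ≤ n - 1 ∧ p.1 < a (p.2 + 1) - a p.2 := by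
    intro p hp
    rw [hQ] at hp
    simp only [Finset.mem_biUnion, Finset.mem_image, Finset.mem_filter, Finset.mem_Icc] at hp
    obtain ⟨d', hd', i, ⟨⟨hi1, hi2⟩, _, hlt⟩, rfl⟩ := hp
    exact ⟨hd', hi1, hi2, hlt⟩
  have hmap : ∀ p ∈ Q, a p.2 + p.1 ∈ S + S - S := by
    intro p hp
    obtain ⟨hpD, hp1, hp2, _⟩ := hQmem p hp
    obtain ⟨j, hj1, hjn, hje⟩ := hocc p.1 hpD
    rw [Finset.mem_sub]
    refine ⟨a p.2 + a (j+1),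
      Finset.add_mem_add (hmemS p.2 hp1 (by omega)) (hmemS (j+1) (by omega) (by omega)),
      a j, hmemS j hj1 (by omega), by rw [← hje]; ring⟩
  have hinj : Set.InjOn (fun p : ℝ × ℕ => a p.2 + p.1) ↑Q := by
    intro p hp q hq hfeq
    simp only [Finset.mem_coe] at hp hq
    obtain ⟨hpD, hp1, hp2, hplt⟩ := hQmem p hp
    obtain ⟨hqD, hq1, hq2, hqlt⟩ := hQmem q hq
    simp only at hfeq
    have hppos := hdpos p.1 hpD
    have hqpos := hdpos q.1 hqD
    rcases lt_trichotomy p.2 q.2 with h | h | h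
    · exfalso
      have h1 : a p.2 + p.1 < a (p.2 + 1) := by linarith
      have h2 : a (p.2 + 1) ≤ a q.2 := hmono' (p.2+1) q.2 (by omega) (by omega) (by omega)
      have h3 : a q.2 < a q.2 + q.1 := by linarith
      linarith
    · have : p.1 = q.1 := by
        have : a p.2 = a q.2 := by rw [h]
        linarith
      exact Prod.ext this h
    · exfalso
      have h1 : a q.2 + q.1 < a (q.2 + 1) := by linarith
      have h2 : a (q.2 + 1) ≤ a p.2 := hmono' (q.2+1) p.2 (by omega) (by omega) (by omega)
      have h3 : a p.2 < a p.2 + p.1 := by linarith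
      linarith
  have hQT : Q.card ≤ (S + S - S).card :=
    Finset.card_le_card_of_injOn _ hmap hinj
  have h2R := sum_ranks D'
  set R := ∑ d' ∈ D', (D'.filter (fun d => d' < d)).card with hR
  have hfinal : L * R ≤ (S + S - S).card := le_trans hQcard hQT
  have hLR : (L:ℝ) * R ≤ ((S + S - S).card : ℝ) := by exact_mod_cast hfinal
  have h2R' : 2 * (R:ℝ) = (D'.card : ℝ) * ((D'.card : ℝ) - 1) := by
    have h := congrArg (fun x : ℕ => (x:ℝ)) h2R
    push_cast [Nat.cast_sub (by omega : 1 ≤ D'.card)] at h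
    linarith
  have hk2' : (2:ℝ) ≤ (D'.card : ℝ) := by exact_mod_cast hk2
  have hL1 : (1:ℝ) ≤ (L : ℝ) := by exact_mod_cast hL
  nlinarith [mul_nonneg (mul_nonneg (by linarith : (0:ℝ) ≤ (L:ℝ)) (by linarith : (0:ℝ) ≤ (D'.card:ℝ))) (by linarith : (0:ℝ) ≤ (D'.card:ℝ) - 2)]
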